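/- arXiv:1011.3208 — 2 statements merged into one kernel-verified Lean document; each statement's English description precedes it below -/
import Mathlib

section
/- Let G = (V, E) be a finite simple graph that is generically locally rigid in ℝ^d, let U ⊆ V with |U| ≥ d, and let G' be the graph obtained from G by adding one new vertex v₀ ∉ V together with the edges {v₀ u : u ∈ U}. Then G' is generically locally rigid in ℝ^d. -/
open scoped Classical

noncomputable section

/-- Two configurations are equivalent if corresponding edge lengths agree. -/
def Equivalent {d : ℕ} {V : Type*} (G : SimpleGraph V)
    (p q : V → EuclideanSpace ℝ (Fin d)) : Prop :=
  ∀ u v, G.Adj u v → ‖p u - p v‖ = ‖q u - q v‖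

/-- Two configurations are congruent if all pairwise distances agree. -/
def Congruent' {d : ℕ} {V : Type*} (p q : V → EuclideanSpace ℝ (Fin d)) : Prop :=
  ∀ u v, ‖p u - p v‖ = ‖q u - q v‖

/-- A configuration is generic if the coordinates of its points are
algebraically independent over `ℚ`. -/
def Generic {d : ℕ} {V : Type*} (p : V → EuclideanSpace ℝ (Fin d)) : Prop :=
  AlgebraicIndependent ℚ (fun x : V × Fin d => p x.1 x.2)

/-- A framework `(G, p)` is locally rigid if all equivalent configurations
sufficiently close to `p` are congruent to `p`. -/
def LocallyRigid {d : ℕ} {V : Type*} (G : SimpleGraph V)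
    (p : V → EuclideanSpace ℝ (Fin d)) : Prop :=
  ∃ ε > 0, ∀ q, Equivalent G p q → (∀ v, ‖q v - p v‖ < ε) → Congruent' p q

/-- Generic local rigidity in `ℝ^d`. -/
def GLR (d : ℕ) {V : Type*} (G : SimpleGraph V) : Prop :=
  ∀ p : V → EuclideanSpace ℝ (Fin d), Generic p → LocallyRigid G p

/-- Generic global rigidity in `ℝ^d`. -/
def GGR (d : ℕ) {V : Type*} (G : SimpleGraph V) : Prop :=
  ∀ p : V → EuclideanSpace ℝ (Fin d), Generic p →
    ∀ q, Equivalent G p q → Congruent' p q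

/-- Generic redundant rigidity in `ℝ^d`: deleting any edge leaves a GLR graph. -/
def GRR (d : ℕ) {V : Type*} (G : SimpleGraph V) : Prop :=
  ∀ e ∈ G.edgeSet, GLR d (G.deleteEdges {e})

/-- `G` is `k`-connected: at least `k+1` vertices, and removing any at most
`k-1` vertices leaves a connected induced subgraph. -/
def KConnected (k : ℕ) {V : Type*} [Fintype V] (G : SimpleGraph V) : Prop :=
  k + 1 ≤ Fintype.card V ∧
    ∀ S : Finset V, S.card ≤ k - 1 → (G.induce ((↑S : Set V)ᶜ)).Connected

/-- The join `G + H` of two graphs: all edges of `G`, all edges of `H`, and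
all cross edges. -/
def graphJoin {α β : Type*} (G : SimpleGraph α) (H : SimpleGraph β) :
    SimpleGraph (α ⊕ β) :=
  SimpleGraph.fromRel (fun x y =>
    (∃ a b, x = Sum.inl a ∧ y = Sum.inl b ∧ G.Adj a b) ∨
    (∃ a b, x = Sum.inr a ∧ y = Sum.inr b ∧ H.Adj a b) ∨
    (x.isLeft ∧ y.isRight))

/-- The disjoint union `G ∪ H` of two graphs. -/
def disjUnion {α β : Type*} (G : SimpleGraph α) (H : SimpleGraph β) :
    SimpleGraph (α ⊕ β) :=
  SimpleGraph.fromRel (fun x y =>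
    (∃ a b, x = Sum.inl a ∧ y = Sum.inl b ∧ G.Adj a b) ∨
    (∃ a b, x = Sum.inr a ∧ y = Sum.inr b ∧ H.Adj a b))

/-- Apply a `d × d` matrix to a point of `ℝ^d`. -/
def matApply {d : ℕ} (A : Matrix (Fin d) (Fin d) ℝ)
    (x : EuclideanSpace ℝ (Fin d)) : EuclideanSpace ℝ (Fin d) :=
  WithLp.toLp 2 (fun i => ∑ j, A i j * x j)

/-- An infinitesimal motion of a framework. -/
def IsInfinitesimalMotion {d : ℕ} {V : Type*} (G : SimpleGraph V)
    (p p' : V → EuclideanSpace ℝ (Fin d)) : Prop :=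
  ∀ u v, G.Adj u v → inner ℝ (p u - p v) (p' u - p' v) = (0 : ℝ)

/-- A trivial motion: `p' v = S (p v) + b` for a skew-symmetric matrix `S`. -/
def IsTrivialMotion {d : ℕ} {V : Type*}
    (p p' : V → EuclideanSpace ℝ (Fin d)) : Prop :=
  ∃ (S : Matrix (Fin d) (Fin d) ℝ) (b : EuclideanSpace ℝ (Fin d)),
    S.transpose = -S ∧ ∀ v, p' v = matApply S (p v) + b

/-- A framework is infinitesimally rigid if every infinitesimal motion is trivial. -/
def InfinitesimallyRigid {d : ℕ} {V : Type*} (G : SimpleGraph V)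
    (p : V → EuclideanSpace ℝ (Fin d)) : Prop :=
  ∀ p', IsInfinitesimalMotion G p p' → IsTrivialMotion p p'

/-- An equilibrium stress: a real number on each edge (zero off edges) with the
equilibrium condition at each vertex. -/
def IsEquilibriumStress {d : ℕ} {V : Type*} [Fintype V] (G : SimpleGraph V)
    (p : V → EuclideanSpace ℝ (Fin d)) (ω : Sym2 V → ℝ) : Prop :=
  (∀ e, e ∉ G.edgeSet → ω e = 0) ∧
  ∀ v, ∑ u ∈ G.neighborFinset v, ω s(u, v) • (p v - p u) = 0

/-- The point `x` lies on the quadric `(A, c, D)`: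
`xᵀ A x + 2⟨c, x⟩ + D = 0`. -/
def OnQuadric {d : ℕ} (A : Matrix (Fin d) (Fin d) ℝ) (c : EuclideanSpace ℝ (Fin d))
    (D : ℝ) (x : EuclideanSpace ℝ (Fin d)) : Prop :=
  (∑ i, ∑ j, x i * A i j * x j) + 2 * (∑ i, c i * x i) + D = 0

/-- The polarized quadric constraint for a pair of points:
`xᵀ A y + ⟨c, x + y⟩ + D = 0`. -/
def PolarConstraint {d : ℕ} (A : Matrix (Fin d) (Fin d) ℝ)
    (c : EuclideanSpace ℝ (Fin d)) (D : ℝ) (x y : EuclideanSpace ℝ (Fin d)) : Prop :=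
  (∑ i, ∑ j, x i * A i j * y j) + (∑ i, c i * (x i + y i)) + D = 0

/-- Add one new vertex (`none`) to `G`, adjacent exactly to the vertices of `U`. -/
def addVertex {V : Type*} (G : SimpleGraph V) (U : Finset V) : SimpleGraph (Option V) :=
  SimpleGraph.fromRel (fun x y =>
    (∃ u v, x = some u ∧ y = some v ∧ G.Adj u v) ∨
    (∃ u, x = none ∧ y = some u ∧ u ∈ U))


namespace AddVertexAux

open Finset Matrix MvPolynomial


variable {E : Type*} [NormedAddCommGroup E] [InnerProductSpace ℝ E]

def gram {n : ℕ} (w : Fin n → E) : Matrix (Fin n) (Fin n) ℝ :=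
  Matrix.of fun i j => inner ℝ (w i) (w j)

def corr {n : ℕ} (w : Fin n → E) (x z : E) : ℝ :=
  (fun k => (inner ℝ (w k) z : ℝ)) ⬝ᵥ ((gram w)⁻¹ *ᵥ fun k => (inner ℝ (w k) x : ℝ))

lemma li_of_gram {n : ℕ} (w : Fin n → E) (h : IsUnit (gram w).det) :
    LinearIndependent ℝ w := by
  rw [Fintype.linearIndependent_iff]
  intro g hg
  have hmv : gram w *ᵥ g = 0 := by
    funext k
    have : (gram w *ᵥ g) k = inner ℝ (w k) (∑ i, g i • w i) := by
      rw [inner_sum]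
      simp [Matrix.mulVec, dotProduct, gram, real_inner_smul_right, mul_comm]
    rw [Pi.zero_apply, this, hg, inner_zero_right]
  have hg0 : g = 0 := by
    calc g = ((gram w)⁻¹ * gram w) *ᵥ g := by rw [Matrix.nonsing_inv_mul _ h, Matrix.one_mulVec]
    _ = (gram w)⁻¹ *ᵥ (gram w *ᵥ g) := by rw [← Matrix.mulVec_mulVec]
    _ = 0 := by rw [hmv, Matrix.mulVec_zero]
  intro i; rw [hg0]; rfl

-- K2
lemma corr_eq_inner_proj {n : ℕ} [FiniteDimensional ℝ E]
    (w : Fin n → E) (h : IsUnit (gram w).det) (x z : E) :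
    corr w x z = inner ℝ ((Submodule.orthogonalProjection (Submodule.span ℝ (Set.range w)) x : E))
      ((Submodule.orthogonalProjection (Submodule.span ℝ (Set.range w)) z : E)) := by
  set W := Submodule.span ℝ (Set.range w) with hW
  set Px : E := (Submodule.orthogonalProjection W x : E)
  set Pz : E := (Submodule.orthogonalProjection W z : E)
  have hPx : Px ∈ W := (Submodule.orthogonalProjection W x).2
  have hPz : Pz ∈ W := (Submodule.orthogonalProjection W z).2
  obtain ⟨c, hc⟩ := (Submodule.mem_span_range_iff_exists_fun ℝ).mp hPx
  have hu : (fun k => (inner ℝ (w k) x : ℝ)) = gram w *ᵥ c := by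
    funext k
    have hwk : w k ∈ W := Submodule.subset_span (Set.mem_range_self k)
    have horth : x - Px ∈ Wᗮ := Submodule.sub_starProjection_mem_orthogonal (K := W) x
    have h1 : (inner ℝ (w k) (x - Px) : ℝ) = 0 := by
      rw [real_inner_comm]
      exact (Submodule.mem_orthogonal' W _).mp horth (w k) hwk
    have h2 : (inner ℝ (w k) x : ℝ) = inner ℝ (w k) Px := by
      have := inner_sub_right (𝕜 := ℝ) (w k) x Px
      rw [h1] at this; linarith
    rw [h2, ← hc, inner_sum]
    simp [Matrix.mulVec, dotProduct, gram, real_inner_smul_right, mul_comm]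
  have hcinv : (gram w)⁻¹ *ᵥ (fun k => (inner ℝ (w k) x : ℝ)) = c := by
    rw [hu, Matrix.mulVec_mulVec, Matrix.nonsing_inv_mul _ h, Matrix.one_mulVec]
  rw [corr, hcinv]
  have hPzz : (inner ℝ Px Pz : ℝ) = inner ℝ Px z := by
    have horth : z - Pz ∈ Wᗮ := Submodule.sub_starProjection_mem_orthogonal (K := W) z
    have h1 : (inner ℝ Px (z - Pz) : ℝ) = 0 := by
      exact (Submodule.mem_orthogonal W _).mp horth Px hPx
    have := inner_sub_right (𝕜 := ℝ) Px z Pz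
    rw [h1] at this; linarith
  rw [hPzz, ← hc, sum_inner]
  simp [dotProduct, real_inner_smul_left, mul_comm]

-- key lemma
lemma key {n : ℕ} [FiniteDimensional ℝ E] (hdim : Module.finrank ℝ E ≤ n + 1)
    (w : Fin n → E) (h : IsUnit (gram w).det) (x z : E) :
    ((inner ℝ x z : ℝ) - corr w x z)^2
      = (‖x‖^2 - corr w x x) * (‖z‖^2 - corr w z z) := by
  set W := Submodule.span ℝ (Set.range w) with hW
  set Px : E := (Submodule.orthogonalProjection W x : E) with hPxdef
  set Pz : E := (Submodule.orthogonalProjection W z : E) with hPzdef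
  have hPx : Px ∈ W := (Submodule.orthogonalProjection W x).2
  have hPz : Pz ∈ W := (Submodule.orthogonalProjection W z).2
  have hox : x - Px ∈ Wᗮ := Submodule.sub_starProjection_mem_orthogonal (K := W) x
  have hoz : z - Pz ∈ Wᗮ := Submodule.sub_starProjection_mem_orthogonal (K := W) z
  have hli : LinearIndependent ℝ w := li_of_gram w h
  have hrankW : Module.finrank ℝ W = n := by
    rw [hW, finrank_span_eq_card hli, Fintype.card_fin]
  have hrank : Module.finrank ℝ (Wᗮ : Submodule ℝ E) ≤ 1 := by
    have := Submodule.finrank_add_finrank_orthogonal (K := W)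
    omega
  -- decomposition identities
  have hxz : (inner ℝ x z : ℝ) = inner ℝ Px Pz + inner ℝ (x - Px) (z - Pz) := by
    have h1 : (inner ℝ Px (z - Pz) : ℝ) = 0 := (Submodule.mem_orthogonal W _).mp hoz Px hPx
    have h2 : (inner ℝ (x - Px) Pz : ℝ) = 0 := by
      rw [real_inner_comm]; exact (Submodule.mem_orthogonal W _).mp hox Pz hPz
    have e1 := inner_sub_left (𝕜 := ℝ) x Px (z - Pz)
    have e2 := inner_sub_right (𝕜 := ℝ) x z Pz
    have e3 := inner_sub_right (𝕜 := ℝ) Px z Pz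
    have e4 := inner_sub_left (𝕜 := ℝ) x Px Pz
    linarith
  have hxx : ‖x‖^2 = ‖Px‖^2 + ‖x - Px‖^2 := by
    have h1 : (inner ℝ Px (x - Px) : ℝ) = 0 := (Submodule.mem_orthogonal W _).mp hox Px hPx
    have := norm_add_sq_real Px (x - Px)
    rw [add_sub_cancel] at this; linarith
  have hzz : ‖z‖^2 = ‖Pz‖^2 + ‖z - Pz‖^2 := by
    have h1 : (inner ℝ Pz (z - Pz) : ℝ) = 0 := (Submodule.mem_orthogonal W _).mp hoz Pz hPz
    have := norm_add_sq_real Pz (z - Pz)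
    rw [add_sub_cancel] at this; linarith
  -- Cauchy-Schwarz equality in ≤1-dim orthogonal complement
  have hcs : (inner ℝ (x - Px) (z - Pz) : ℝ)^2 = ‖x - Px‖^2 * ‖z - Pz‖^2 := by
    by_cases hx0 : x - Px = 0
    · simp [hx0]
    · have hspan : Submodule.span ℝ {x - Px} = Wᗮ := by
        apply Submodule.eq_of_le_of_finrank_le
        · rw [Submodule.span_singleton_le_iff_mem]; exact hox
        · rw [finrank_span_singleton hx0]; exact hrank
      have : z - Pz ∈ Submodule.span ℝ ({x - Px} : Set E) := hspan ▸ hoz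
      obtain ⟨t, ht⟩ := Submodule.mem_span_singleton.mp this
      rw [← ht, real_inner_smul_right, real_inner_self_eq_norm_sq, norm_smul]
      simp [Real.norm_eq_abs, mul_pow, sq_abs]
      ring
  rw [corr_eq_inner_proj w h x z, corr_eq_inner_proj w h x x, corr_eq_inner_proj w h z z,
    ← hPxdef, ← hPzdef, real_inner_self_eq_norm_sq, real_inner_self_eq_norm_sq]
  rw [hxz, hxx, hzz]
  ring_nf
  nlinarith [hcs]

lemma gram_det_ne_zero {m : ℕ} {ι : Type*} (e : Fin (m+1) → ι) (he : Function.Injective e)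
    (p : ι → EuclideanSpace ℝ (Fin (m+1)))
    (hp : AlgebraicIndependent ℚ (fun x : ι × Fin (m+1) => p x.1 x.2)) :
    (gram (fun i : Fin m => p (e i.succ) - p (e 0))).det ≠ 0 := by
  set f : ι × Fin (m+1) → ℝ := fun x => p x.1 x.2 with hf
  set Pmat : Matrix (Fin m) (Fin m) (MvPolynomial (ι × Fin (m+1)) ℚ) :=
    Matrix.of (fun i k => ∑ j : Fin (m+1),
      (X (e i.succ, j) - X (e 0, j)) * (X (e k.succ, j) - X (e 0, j))) with hPmat
  have hmap : (gram (fun i : Fin m => p (e i.succ) - p (e 0)))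
      = Pmat.map (aeval f) := by
    funext i k
    simp only [gram, Matrix.of_apply, Matrix.map_apply, hPmat, map_sum, _root_.map_mul,
      map_sub, aeval_X, hf]
    rw [PiLp.inner_apply]
    apply Finset.sum_congr rfl
    intro j _
    simp [RCLike.inner_apply, PiLp.sub_apply, mul_comm]
  intro hdet
  have hinj := algebraicIndependent_iff_injective_aeval.mp hp
  have hP0 : Pmat.det = 0 := by
    apply hinj
    rw [map_zero]
    have h2 := AlgHom.map_det (aeval f : MvPolynomial (ι × Fin (m+1)) ℚ →ₐ[ℚ] ℝ) Pmat
    simp only [AlgHom.mapMatrix_apply] at h2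
    rw [h2, ← hmap]
    exact hdet
  -- evaluate at a rational point giving identity matrix
  set ψ : ι × Fin (m+1) → ℚ := fun x =>
    if ∃ i : Fin m, x.2 = i.castSucc ∧ x.1 = e i.succ then 1 else 0 with hψ
  have hzero : ∀ j : Fin (m+1), ψ (e 0, j) = 0 := by
    intro j
    rw [hψ]
    simp only
    rw [if_neg]
    rintro ⟨i', -, hi'⟩
    exact Fin.succ_ne_zero i' (he hi').symm
  have hone : ∀ (i : Fin m) (j : Fin (m+1)),
      ψ (e i.succ, j) = if j = i.castSucc then 1 else 0 := by
    intro i j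
    rw [hψ]
    simp only
    by_cases hj : j = i.castSucc
    · rw [if_pos ⟨i, hj, rfl⟩, if_pos hj]
    · rw [if_neg, if_neg hj]
      rintro ⟨i', hj', hi'⟩
      exact hj (by rw [hj', Fin.succ_injective _ (he hi')])
  have heval : (Pmat.map (eval ψ)) = 1 := by
    funext i k
    simp only [Matrix.map_apply, hPmat, Matrix.of_apply, map_sum, _root_.map_mul, map_sub,
      eval_X, hzero, hone, sub_zero]
    have hterm : ∀ j : Fin (m+1),
        (if j = i.castSucc then (1:ℚ) else 0) * (if j = k.castSucc then 1 else 0)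
        = if j = i.castSucc ∧ j = k.castSucc then 1 else 0 := by
      intro j; by_cases h1 : j = i.castSucc <;> by_cases h2 : j = k.castSucc <;> simp [h1, h2]
    rw [Finset.sum_congr rfl fun j _ => hterm j]
    by_cases hik : i = k
    · subst hik
      rw [Matrix.one_apply_eq]
      simp
    · rw [Matrix.one_apply_ne hik]
      apply Finset.sum_eq_zero
      intro j _
      rw [if_neg]
      rintro ⟨h1, h2⟩
      exact hik (Fin.castSucc_injective _ (h1 ▸ h2))
  have hcontra : (1 : ℚ) = 0 := by
    have h1 : (Pmat.map (eval ψ)).det = 1 := by rw [heval, Matrix.det_one]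
    have h2 := RingHom.map_det (eval ψ) Pmat
    simp only [RingHom.mapMatrix_apply] at h2
    rw [← h2, hP0, map_zero] at h1
    exact h1.symm
  exact one_ne_zero hcontra


lemma inner_close {E : Type*} [NormedAddCommGroup E] [InnerProductSpace ℝ E]
    (x z : E) {c : ℝ} (hc : 0 < c) :
    ∃ δ > 0, ∀ y w : E, ‖y - x‖ < δ → ‖w - z‖ < δ →
      |(inner ℝ y w : ℝ) - inner ℝ x z| < c := by
  have hcont : ContinuousAt (fun pr : E × E => (inner ℝ pr.1 pr.2 : ℝ)) (x, z) :=
    continuous_inner.continuousAt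
  rw [Metric.continuousAt_iff] at hcont
  obtain ⟨δ, hδ, h⟩ := hcont c hc
  refine ⟨δ, hδ, fun y w hy hw => ?_⟩
  have hd : dist ((y, w) : E × E) (x, z) < δ := by
    rw [Prod.dist_eq]
    exact max_lt (by rwa [dist_eq_norm]) (by rwa [dist_eq_norm])
  have := h hd
  rwa [Real.dist_eq] at this

lemma polar_inner {E : Type*} [NormedAddCommGroup E] [InnerProductSpace ℝ E] (A B C : E) :
    (inner ℝ (A - C) (B - C) : ℝ) = (‖A - C‖^2 + ‖B - C‖^2 - ‖A - B‖^2)/2 := by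
  have h := @norm_sub_sq_real E _ _ (A - C) (B - C)
  have h2 : A - C - (B - C) = A - B := by abel
  rw [h2] at h
  linarith

end AddVertexAux

set_option maxHeartbeats 2000000 in
/-- Proposition: adding a new vertex joined to at least `d` vertices of a
generically locally rigid graph in `ℝ^d` yields a generically locally rigid graph. -/
theorem add_vertex_GLR {V : Type*} [Fintype V] (d : ℕ) (G : SimpleGraph V)
    (hG : GLR d G) (U : Finset V) (hU : d ≤ U.card) :
    GLR d (addVertex G U) := by
  classical
  intro p hp
  rcases Nat.eq_zero_or_pos d with hd | hd
  · subst hd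
    refine ⟨1, one_pos, fun q _ _ u v => ?_⟩
    have h1 : p u - p v = q u - q v := PiLp.ext fun i => i.elim0
    rw [h1]
  obtain ⟨m, rfl⟩ : ∃ m, d = m + 1 := ⟨d - 1, by omega⟩
  obtain ⟨T, hTU, hT⟩ := Finset.exists_subset_card_eq hU
  set e0 : Fin (m + 1) → V := fun i => (T.equivFin.symm (Fin.cast hT.symm i) : V) with he0def
  have he0 : Function.Injective e0 := by
    intro i j h
    have h2 : Fin.cast hT.symm i = Fin.cast hT.symm j :=
      T.equivFin.symm.injective (Subtype.ext h)
    exact Fin.ext (by simpa using congrArg Fin.val h2)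
  have heU : ∀ i, e0 i ∈ U := fun i => hTU (T.equivFin.symm (Fin.cast hT.symm i)).2
  set eo : Fin (m + 1) → Option V := fun i => some (e0 i) with heodef
  have heo : Function.Injective eo := fun i j h => he0 (Option.some_injective V h)
  set w : Fin m → EuclideanSpace ℝ (Fin (m + 1)) := fun i => p (eo i.succ) - p (eo 0) with hwdef
  have hp2 : AlgebraicIndependent ℚ (fun x : Option V × Fin (m + 1) => p x.1 x.2) := by
    rw [Generic] at hp; exact hp
  have hdet : (AddVertexAux.gram w).det ≠ 0 :=
    AddVertexAux.gram_det_ne_zero eo heo p hp2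
  -- restriction is generic
  have hp' : Generic (fun v : V => p (some v)) := by
    have hinj : Function.Injective
        (fun x : V × Fin (m + 1) => ((some x.1 : Option V), x.2)) := by
      intro a b h
      simpa [Prod.ext_iff] using h
    have h3 := hp2.comp (fun x : V × Fin (m + 1) => ((some x.1 : Option V), x.2)) hinj
    rw [Generic]
    have h4 : ((fun x : Option V × Fin (m + 1) => p x.1 x.2) ∘
        (fun x : V × Fin (m + 1) => ((some x.1 : Option V), x.2)))
        = fun x : V × Fin (m + 1) => p (some x.1) x.2 := rfl
    rw [h4] at h3
    exact h3
  obtain ⟨ε₀, hε₀, hrig⟩ := hG _ hp'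
  set a0 : EuclideanSpace ℝ (Fin (m + 1)) := p (some (e0 0)) with ha0def
  set xt : EuclideanSpace ℝ (Fin (m + 1)) := p none - a0 with hxtdef
  set hv : V → ℝ := fun v =>
    (inner ℝ xt (p (some v) - a0) : ℝ) - AddVertexAux.corr w xt (p (some v) - a0) with hhvdef
  have hcpos : ∀ v : V, 0 < (if hv v = 0 then 1 else 2 * |hv v|) := by
    intro v
    split_ifs with h
    · exact one_pos
    · positivity
  choose δ hδpos hδ using fun v : V =>
    AddVertexAux.inner_close xt (p (some v) - a0) (hcpos v)
  have hne : (Finset.univ : Finset V).Nonempty := ⟨e0 0, Finset.mem_univ _⟩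
  set ε : ℝ := min ε₀ ((Finset.univ.inf' hne δ) / 2) with hεdef
  have hεpos : 0 < ε := by
    apply lt_min hε₀
    have : 0 < Finset.univ.inf' hne δ :=
      (Finset.lt_inf'_iff hne).mpr fun v _ => hδpos v
    linarith
  refine ⟨ε, hεpos, ?_⟩
  intro q hequiv hclose
  -- restriction congruent
  have hclose' : ∀ v : V, ‖q (some v) - p (some v)‖ < ε₀ :=
    fun v => lt_of_lt_of_le (hclose (some v)) (min_le_left _ _)
  have hequiv' : Equivalent G (fun v : V => p (some v)) (fun v : V => q (some v)) := by
    intro u v huv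
    apply hequiv
    rw [addVertex, SimpleGraph.fromRel_adj]
    exact ⟨by simp [huv.ne], Or.inl (Or.inl ⟨u, v, rfl, rfl, huv⟩)⟩
  have hcongr : Congruent' (fun v : V => p (some v)) (fun v : V => q (some v)) :=
    hrig _ hequiv' hclose'
  have hedge : ∀ u ∈ U, ‖p none - p (some u)‖ = ‖q none - q (some u)‖ := by
    intro u hu
    apply hequiv
    rw [addVertex, SimpleGraph.fromRel_adj]
    exact ⟨by simp, Or.inl (Or.inr ⟨u, rfl, rfl, hu⟩)⟩
  have hDr : ∀ u u' : V, ‖p (some u) - p (some u')‖ = ‖q (some u) - q (some u')‖ :=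
    fun u u' => hcongr u u'
  -- main claim
  have main : ∀ v : V, ‖p none - p (some v)‖ = ‖q none - q (some v)‖ := by
    intro v
    set b0 : EuclideanSpace ℝ (Fin (m + 1)) := q (some (e0 0)) with hb0def
    set w' : Fin m → EuclideanSpace ℝ (Fin (m + 1)) := fun i => q (some (e0 i.succ)) - b0 with hw'def
    set yt : EuclideanSpace ℝ (Fin (m + 1)) := q none - b0 with hytdef
    set zt : EuclideanSpace ℝ (Fin (m + 1)) := p (some v) - a0 with hztdef
    set zt' : EuclideanSpace ℝ (Fin (m + 1)) := q (some v) - b0 with hzt'def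
    have hgram : AddVertexAux.gram w' = AddVertexAux.gram w := by
      funext i j
      show (inner ℝ (w' i) (w' j) : ℝ) = inner ℝ (w i) (w j)
      rw [hw'def, hwdef]
      simp only [heodef]
      rw [AddVertexAux.polar_inner, AddVertexAux.polar_inner, hb0def,
        hDr (e0 i.succ) (e0 0), hDr (e0 j.succ) (e0 0), hDr (e0 i.succ) (e0 j.succ)]
    have hu' : (fun k => (inner ℝ (w' k) yt : ℝ)) = fun k => inner ℝ (w k) xt := by
      funext k
      rw [hw'def, hwdef, hytdef, hxtdef, ha0def, hb0def]
      simp only [heodef]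
      rw [AddVertexAux.polar_inner, AddVertexAux.polar_inner,
        hDr (e0 k.succ) (e0 0), hedge (e0 0) (heU 0),
        show ‖p (some (e0 k.succ)) - p none‖ = ‖q (some (e0 k.succ)) - q none‖ by
          rw [norm_sub_rev, norm_sub_rev (q _)]; exact hedge _ (heU k.succ)]
    have hv' : (fun k => (inner ℝ (w' k) zt' : ℝ)) = fun k => inner ℝ (w k) zt := by
      funext k
      rw [hw'def, hwdef, hzt'def, hztdef, ha0def, hb0def]
      simp only [heodef]
      rw [AddVertexAux.polar_inner, AddVertexAux.polar_inner,
        hDr (e0 k.succ) (e0 0), hDr v (e0 0), hDr (e0 k.succ) v]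
    have hnx : ‖yt‖ = ‖xt‖ := by
      rw [hytdef, hxtdef, ha0def, hb0def]
      exact (hedge (e0 0) (heU 0)).symm
    have hnz : ‖zt'‖ = ‖zt‖ := by
      rw [hzt'def, hztdef, ha0def, hb0def]
      exact (hDr v (e0 0)).symm
    have hdet' : (AddVertexAux.gram w').det ≠ 0 := by rw [hgram]; exact hdet
    have hdim : Module.finrank ℝ (EuclideanSpace ℝ (Fin (m + 1))) ≤ m + 1 := le_of_eq (finrank_euclideanSpace_fin)
    have kp := AddVertexAux.key hdim w (isUnit_iff_ne_zero.mpr hdet) xt zt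
    have kq := AddVertexAux.key hdim w' (isUnit_iff_ne_zero.mpr hdet') yt zt'
    have hcorr1 : AddVertexAux.corr w' yt zt' = AddVertexAux.corr w xt zt := by
      rw [AddVertexAux.corr, AddVertexAux.corr, hgram, hu', hv']
    have hcorr2 : AddVertexAux.corr w' yt yt = AddVertexAux.corr w xt xt := by
      rw [AddVertexAux.corr, AddVertexAux.corr, hgram, hu']
    have hcorr3 : AddVertexAux.corr w' zt' zt' = AddVertexAux.corr w zt zt := by
      rw [AddVertexAux.corr, AddVertexAux.corr, hgram, hv']
    rw [hcorr1, hcorr2, hcorr3, hnx, hnz] at kq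
    set Ip : ℝ := inner ℝ xt zt with hIpdef
    set Iq : ℝ := inner ℝ yt zt' with hIqdef
    set K : ℝ := AddVertexAux.corr w xt zt with hKdef
    have hsq : (Iq - K)^2 = (Ip - K)^2 := by rw [kq, kp]
    -- the closeness bound
    have hIclose : |Iq - Ip| < if hv v = 0 then 1 else 2 * |hv v| := by
      have h1 : ‖yt - xt‖ < δ v := by
        have e1 : yt - xt = (q none - p none) - (b0 - a0) := by
          rw [hytdef, hxtdef]; abel
        have e2 : ‖yt - xt‖ ≤ ‖q none - p none‖ + ‖b0 - a0‖ := by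
          rw [e1]; exact norm_sub_le _ _
        have e3 : ‖b0 - a0‖ < ε := hclose (some (e0 0))
        have e4 : ‖q none - p none‖ < ε := hclose none
        have e5 : ε ≤ δ v / 2 := le_trans (min_le_right _ _)
          (by
            have := Finset.inf'_le δ (Finset.mem_univ v)
            linarith)
        linarith
      have h2 : ‖zt' - zt‖ < δ v := by
        have e1 : zt' - zt = (q (some v) - p (some v)) - (b0 - a0) := by
          rw [hzt'def, hztdef]; abel
        have e2 : ‖zt' - zt‖ ≤ ‖q (some v) - p (some v)‖ + ‖b0 - a0‖ := by
          rw [e1]; exact norm_sub_le _ _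
        have e3 : ‖b0 - a0‖ < ε := hclose (some (e0 0))
        have e4 : ‖q (some v) - p (some v)‖ < ε := hclose (some v)
        have e5 : ε ≤ δ v / 2 := le_trans (min_le_right _ _)
          (by
            have := Finset.inf'_le δ (Finset.mem_univ v)
            linarith)
        linarith
      have := hδ v yt zt' h1 h2
      rwa [← hIqdef, ← hztdef, ← hIpdef] at this
    have hIeq : Iq = Ip := by
      have hfac : (Iq - Ip) * (Iq + Ip - 2 * K) = 0 := by nlinarith [hsq]
      rcases mul_eq_zero.mp hfac with h | h
      · linarith [h]
      · by_cases h0 : hv v = 0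
        · have hIpK : Ip - K = 0 := by
            have : hv v = Ip - K := by rw [hhvdef, hIpdef, hKdef, hztdef]
            rw [← this]; exact h0
          linarith
        · exfalso
          have hIpK : Ip - K = hv v := by rw [hhvdef, hIpdef, hKdef, hztdef]
          rw [if_neg h0] at hIclose
          have : Iq - Ip = -2 * (hv v) := by rw [← hIpK]; linarith
          rw [this] at hIclose
          have habs : |(-2 : ℝ) * hv v| = 2 * |hv v| := by
            rw [abs_mul]
            norm_num
          rw [habs] at hIclose
          exact lt_irrefl _ hIclose
    -- finish with norms
    have hpn : p none - p (some v) = xt - zt := by rw [hxtdef, hztdef]; abel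
    have hqn : q none - q (some v) = yt - zt' := by rw [hytdef, hzt'def]; abel
    rw [hpn, hqn]
    have hp2' : ‖xt - zt‖^2 = ‖yt - zt'‖^2 := by
      have e1 := norm_sub_sq_real xt zt
      have e2 := norm_sub_sq_real yt zt'
      have e3 : ‖yt‖^2 = ‖xt‖^2 := by rw [hnx]
      have e4 : ‖zt'‖^2 = ‖zt‖^2 := by rw [hnz]
      have e5 : (inner ℝ yt zt' : ℝ) = inner ℝ xt zt := hIeq
      linarith
    rw [← Real.sqrt_sq (norm_nonneg (xt - zt)), ← Real.sqrt_sq (norm_nonneg (yt - zt')), hp2']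
  -- conclude congruence
  intro α β
  match α, β with
  | none, none => simp
  | none, some v => exact main v
  | some v, none => rw [norm_sub_rev, norm_sub_rev (q _)]; exact main v
  | some u, some v => exact hcongr u v

end
end

section
/- Let d ≥ 1 and let G + H be a joined graph that is balanced in dimension d (|V_G|, |V_H| ≥ d+1), and let p be a generic configuration of G + H in ℝ^d. Then the framework (G + H, p) is infinitesimally rigid if and only if there is no quadric (A, c, D) ≠ 0 (A a symmetric d×d real matrix, c ∈ ℝ^d, D ∈ ℝ, not all zero) such that every point p v lies on the quadric (i.e., (p v)ᵀ A (p v) + 2⟨c, p v⟩ + D = 0 for all vertices v) and such that for every extraneous edge uv (an edge of G or of H), (p u)ᵀ A (p v) + ⟨c, p u + p v⟩ + D = 0. (Equivalently: the quadric rigidity matrix of the joined framework has full rank (d+2 choose 2) if and only if the framework is infinitesimally rigid.) -/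
open scoped Classical

noncomputable section

section QRMaux

open Matrix

variable {d : ℕ}

private lemma inner_dot (x y z w : EuclideanSpace ℝ (Fin d)) :
    (inner ℝ (x - y) (z - w) : ℝ) =
      ((x : Fin d → ℝ) - (y : Fin d → ℝ)) ⬝ᵥ ((z : Fin d → ℝ) - (w : Fin d → ℝ)) := by
  simp [PiLp.inner_apply, RCLike.inner_apply, dotProduct, PiLp.sub_apply,
    Pi.sub_apply, mul_comm]

private lemma sum2_dot (A : Matrix (Fin d) (Fin d) ℝ) (x y : Fin d → ℝ) :
    ∑ i, ∑ j, x i * A i j * y j = x ⬝ᵥ A.mulVec y := by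
  simp [dotProduct, Matrix.mulVec, Finset.mul_sum, mul_assoc]

private lemma sum1_dot (c x : Fin d → ℝ) : ∑ i, c i * x i = c ⬝ᵥ x := rfl

private lemma sum1_dot' (c x y : Fin d → ℝ) :
    ∑ i, c i * (x i + y i) = c ⬝ᵥ x + c ⬝ᵥ y := by
  simp [dotProduct, mul_add, Finset.sum_add_distrib]

private lemma dot_swap (M : Matrix (Fin d) (Fin d) ℝ) (x y : Fin d → ℝ) :
    x ⬝ᵥ M.mulVec y = y ⬝ᵥ Mᵀ.mulVec x := by
  rw [Matrix.dotProduct_mulVec, ← Matrix.mulVec_transpose, dotProduct_comm]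

private lemma matrix_eq_zero {B T : Matrix (Fin d) (Fin d) ℝ} (hB : B.det ≠ 0) (h : T * B = 0) :
    T = 0 := by
  have hB' : IsUnit B.det := isUnit_iff_ne_zero.2 hB
  calc T = T * B * B⁻¹ := by rw [Matrix.mul_nonsing_inv_cancel_right _ _ hB']
  _ = 0 := by rw [h, Matrix.zero_mul]

private lemma mulVec_cancel {B : Matrix (Fin d) (Fin d) ℝ} (hB : B.det ≠ 0) {x y : Fin d → ℝ}
    (h : B.mulVec x = B.mulVec y) : x = y := by
  have hB' : IsUnit B.det := isUnit_iff_ne_zero.2 hB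
  have h2 := congrArg (fun v => B⁻¹.mulVec v) h
  simpa [Matrix.mulVec_mulVec, Matrix.nonsing_inv_mul _ hB', Matrix.one_mulVec] using h2

private lemma mul_basis {T B : Matrix (Fin d) (Fin d) ℝ}
    (h : ∀ j, T.mulVec (fun i => B i j) = 0) : T * B = 0 := by
  ext i j
  have := congrFun (h j) i
  simpa [Matrix.mul_apply, Matrix.mulVec, dotProduct] using this

private lemma kill {B T : Matrix (Fin d) (Fin d) ℝ} (hB : B.det ≠ 0)
    (h : ∀ j, T.mulVec (fun i => B i j) = 0) : T = 0 :=
  matrix_eq_zero hB (mul_basis h)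

private lemma key4 {a a' b b' ua ua' wb wb' : Fin d → ℝ}
    (h1 : (a - b) ⬝ᵥ (ua - wb) = 0) (h2 : (a' - b) ⬝ᵥ (ua' - wb) = 0)
    (h3 : (a - b') ⬝ᵥ (ua - wb') = 0) (h4 : (a' - b') ⬝ᵥ (ua' - wb') = 0) :
    (a - a') ⬝ᵥ (wb - wb') + (b - b') ⬝ᵥ (ua - ua') = 0 := by
  simp only [sub_dotProduct, dotProduct_sub] at *
  linarith

private lemma fwd_cross {A : Matrix (Fin d) (Fin d) ℝ} (hA : A.IsSymm) {c : Fin d → ℝ} {D : ℝ}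
    {a b : Fin d → ℝ}
    (ha : a ⬝ᵥ A.mulVec a + 2 * (c ⬝ᵥ a) + D = 0)
    (hb : b ⬝ᵥ A.mulVec b + 2 * (c ⬝ᵥ b) + D = 0) :
    (a - b) ⬝ᵥ ((A.mulVec a + c) - (-(A.mulVec b + c))) = 0 := by
  have hswap : b ⬝ᵥ A.mulVec a = a ⬝ᵥ A.mulVec b := by
    rw [dot_swap, hA.eq]
  have hca : c ⬝ᵥ a = a ⬝ᵥ c := dotProduct_comm _ _
  have hcb : c ⬝ᵥ b = b ⬝ᵥ c := dotProduct_comm _ _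
  simp only [sub_neg_eq_add, sub_dotProduct, dotProduct_add]
  linarith

private lemma fwd_same {A : Matrix (Fin d) (Fin d) ℝ} (hA : A.IsSymm) {c : Fin d → ℝ} {D : ℝ}
    {a b : Fin d → ℝ}
    (ha : a ⬝ᵥ A.mulVec a + 2 * (c ⬝ᵥ a) + D = 0)
    (hb : b ⬝ᵥ A.mulVec b + 2 * (c ⬝ᵥ b) + D = 0)
    (hpol : a ⬝ᵥ A.mulVec b + (c ⬝ᵥ a + c ⬝ᵥ b) + D = 0) :
    (a - b) ⬝ᵥ ((A.mulVec a + c) - (A.mulVec b + c)) = 0 := by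
  have hswap : b ⬝ᵥ A.mulVec a = a ⬝ᵥ A.mulVec b := by
    rw [dot_swap, hA.eq]
  simp only [add_sub_add_right_eq_sub, sub_dotProduct, dotProduct_sub]
  linarith

private lemma fwd_same' {A : Matrix (Fin d) (Fin d) ℝ} (hA : A.IsSymm) {c : Fin d → ℝ} {D : ℝ}
    {a b : Fin d → ℝ}
    (ha : a ⬝ᵥ A.mulVec a + 2 * (c ⬝ᵥ a) + D = 0)
    (hb : b ⬝ᵥ A.mulVec b + 2 * (c ⬝ᵥ b) + D = 0)
    (hpol : a ⬝ᵥ A.mulVec b + (c ⬝ᵥ a + c ⬝ᵥ b) + D = 0) :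
    (a - b) ⬝ᵥ ((-(A.mulVec a + c)) - (-(A.mulVec b + c))) = 0 := by
  have h0 := fwd_same hA ha hb hpol
  have hrw : ((-(A.mulVec a + c)) - (-(A.mulVec b + c)))
      = -((A.mulVec a + c) - (A.mulVec b + c)) := by abel
  rw [hrw, dotProduct_neg, h0, neg_zero]

private lemma rawq_eq {M : Matrix (Fin d) (Fin d) ℝ} {a b e f : Fin d → ℝ}
    (h : (a - b) ⬝ᵥ ((M.mulVec a + e) - ((-Mᵀ).mulVec b + f)) = 0) :
    a ⬝ᵥ M.mulVec a + a ⬝ᵥ (e - f) = b ⬝ᵥ M.mulVec b + b ⬝ᵥ (e - f) := by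
  have h1 : a ⬝ᵥ Mᵀ.mulVec b = b ⬝ᵥ M.mulVec a := by
    rw [dot_swap, Matrix.transpose_transpose]
  have h2 : b ⬝ᵥ Mᵀ.mulVec b = b ⬝ᵥ M.mulVec b := (dot_swap M b b).symm
  simp only [Matrix.neg_mulVec, sub_dotProduct, dotProduct_sub,
    dotProduct_add, dotProduct_neg] at h ⊢
  linarith

private lemma bwd_onquad {M : Matrix (Fin d) (Fin d) ℝ} {e f x : Fin d → ℝ} {D : ℝ}
    (hD : x ⬝ᵥ M.mulVec x + x ⬝ᵥ (e - f) + D = 0) :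
    x ⬝ᵥ ((1/2 : ℝ) • (M + Mᵀ)).mulVec x + 2 * (((1/2 : ℝ) • (e - f)) ⬝ᵥ x) + D = 0 := by
  have h2 : x ⬝ᵥ Mᵀ.mulVec x = x ⬝ᵥ M.mulVec x := (dot_swap M x x).symm
  have h3 : (e - f) ⬝ᵥ x = x ⬝ᵥ (e - f) := dotProduct_comm _ _
  simp only [Matrix.smul_mulVec, Matrix.add_mulVec, dotProduct_smul,
    smul_dotProduct, dotProduct_add, smul_eq_mul]
  linarith

private lemma bwd_polar {M : Matrix (Fin d) (Fin d) ℝ} {e f x y : Fin d → ℝ} {D : ℝ}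
    (hx : x ⬝ᵥ M.mulVec x + x ⬝ᵥ (e - f) + D = 0)
    (hy : y ⬝ᵥ M.mulVec y + y ⬝ᵥ (e - f) + D = 0)
    (hxy : (x - y) ⬝ᵥ M.mulVec (x - y) = 0) :
    x ⬝ᵥ ((1/2 : ℝ) • (M + Mᵀ)).mulVec y
      + (((1/2 : ℝ) • (e - f)) ⬝ᵥ x + ((1/2 : ℝ) • (e - f)) ⬝ᵥ y) + D = 0 := by
  have h1 : y ⬝ᵥ M.mulVec x = x ⬝ᵥ Mᵀ.mulVec y := dot_swap M y x
  have h2 : x ⬝ᵥ (e - f) = (e - f) ⬝ᵥ x := dotProduct_comm _ _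
  have h3 : y ⬝ᵥ (e - f) = (e - f) ⬝ᵥ y := dotProduct_comm _ _
  simp only [Matrix.smul_mulVec, Matrix.add_mulVec, dotProduct_smul,
    smul_dotProduct, dotProduct_add, smul_eq_mul,
    Matrix.mulVec_sub, sub_dotProduct, dotProduct_sub] at h1 h2 h3 hx hy hxy ⊢
  linarith

private lemma mulVec_sub_apply (M : Matrix (Fin d) (Fin d) ℝ)
    (x y : Fin d → ℝ) (i : Fin d) :
    M.mulVec (x - y) i = M.mulVec x i - M.mulVec y i := by
  show (∑ j, M i j * (x j - y j)) = (∑ j, M i j * x j) - (∑ j, M i j * y j)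
  rw [← Finset.sum_sub_distrib]
  exact Finset.sum_congr rfl fun j _ => mul_sub _ _ _

private lemma matApply_sub' (M : Matrix (Fin d) (Fin d) ℝ)
    (x y : EuclideanSpace ℝ (Fin d)) :
    matApply M x - matApply M y = M.mulVec (x - y) := by
  funext i
  show (∑ j, M i j * x j) - (∑ j, M i j * y j) = ∑ j, M i j * (x j - y j)
  rw [← Finset.sum_sub_distrib]
  exact Finset.sum_congr rfl fun j _ => (mul_sub _ _ _).symm

private lemma generic_det_ne {V : Type*} (p : V → EuclideanSpace ℝ (Fin d)) (hp : Generic p)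
    (ι : Fin (d+1) → V) (hι : Function.Injective ι) :
    (Matrix.of fun i j : Fin d => p (ι j.succ) i - p (ι 0) i).det ≠ 0 := by
  intro h0
  set f : V × Fin d → ℝ := fun x => p x.1 x.2 with hf
  set Pm : Matrix (Fin d) (Fin d) (MvPolynomial (V × Fin d) ℚ) :=
    Matrix.of (fun i j : Fin d =>
      MvPolynomial.X (ι j.succ, i) - MvPolynomial.X (ι 0, i)) with hPm
  have hmap : Pm.map (MvPolynomial.aeval f) =
      Matrix.of fun i j : Fin d => p (ι j.succ) i - p (ι 0) i := by
    ext i j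
    simp [hPm, hf]
  have hdet : (MvPolynomial.aeval f) Pm.det = 0 := by
    rw [AlgHom.map_det, AlgHom.mapMatrix_apply]
    rw [show (Pm.map (MvPolynomial.aeval f)) = Pm.map (MvPolynomial.aeval f) from rfl, hmap]
    exact h0
  have hinj : Function.Injective
      (MvPolynomial.aeval f : MvPolynomial (V × Fin d) ℚ →ₐ[ℚ] ℝ) := hp
  have hPd : Pm.det = 0 := by
    apply hinj
    simpa using hdet
  set q : V × Fin d → ℚ := fun x => if x.1 = ι x.2.succ then 1 else 0 with hq
  have hone : (MvPolynomial.aeval q) Pm.det = (1 : ℚ) := by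
    rw [AlgHom.map_det, AlgHom.mapMatrix_apply]
    have h1 : (Pm.map (MvPolynomial.aeval q)) = 1 := by
      ext i j
      by_cases hij : i = j <;>
        simp [hPm, hq, Matrix.one_apply, hij, hι.eq_iff, Fin.succ_ne_zero,
          (Fin.succ_ne_zero j).symm, eq_comm]
    rw [h1]; simp
  rw [hPd] at hone
  simp at hone

end QRMaux


open Matrix

/-- Proposition: a generic framework of a balanced joined graph is
infinitesimally rigid iff no nonzero quadric satisfies all vertex constraints
and all extraneous-edge polarization constraints (i.e. the quadric rigidity
matrix has full rank `C(d+2, 2)`). -/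
theorem QRM_full_rank_iff_inf_rigid {α β : Type*} [Fintype α] [Fintype β]
    (d : ℕ) (hd : 1 ≤ d) (G : SimpleGraph α) (H : SimpleGraph β)
    (hα : d + 1 ≤ Fintype.card α) (hβ : d + 1 ≤ Fintype.card β)
    (p : α ⊕ β → EuclideanSpace ℝ (Fin d)) (hp : Generic p) :
    InfinitesimallyRigid (graphJoin G H) p ↔
      ¬ ∃ (A : Matrix (Fin d) (Fin d) ℝ) (c : EuclideanSpace ℝ (Fin d)) (D : ℝ),
          A.IsSymm ∧ (A ≠ 0 ∨ c ≠ 0 ∨ D ≠ 0) ∧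
          (∀ v, OnQuadric A c D (p v)) ∧
          (∀ u v, G.Adj u v → PolarConstraint A c D (p (Sum.inl u)) (p (Sum.inl v))) ∧
          (∀ u v, H.Adj u v → PolarConstraint A c D (p (Sum.inr u)) (p (Sum.inr v))) := by
  classical
  obtain ⟨ιa⟩ : Nonempty (Fin (d+1) ↪ α) :=
    Function.Embedding.nonempty_of_card_le (by simpa using hα)
  obtain ⟨ιb⟩ : Nonempty (Fin (d+1) ↪ β) :=
    Function.Embedding.nonempty_of_card_le (by simpa using hβ)
  set Ba : Matrix (Fin d) (Fin d) ℝ :=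
    Matrix.of (fun i j : Fin d => p (Sum.inl (ιa j.succ)) i - p (Sum.inl (ιa 0)) i) with hBa_def
  set Bb : Matrix (Fin d) (Fin d) ℝ :=
    Matrix.of (fun i j : Fin d => p (Sum.inr (ιb j.succ)) i - p (Sum.inr (ιb 0)) i) with hBb_def
  have hBa : Ba.det ≠ 0 :=
    generic_det_ne p hp (fun k => Sum.inl (ιa k))
      (fun x y hxy => ιa.injective (Sum.inl_injective hxy))
  have hBb : Bb.det ≠ 0 :=
    generic_det_ne p hp (fun k => Sum.inr (ιb k))
      (fun x y hxy => ιb.injective (Sum.inr_injective hxy))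
  have hBaT : (Baᵀ).det ≠ 0 := by rwa [Matrix.det_transpose]
  have hBbT : (Bbᵀ).det ≠ 0 := by rwa [Matrix.det_transpose]
  have adj_cross : ∀ (g : α) (h : β), (graphJoin G H).Adj (Sum.inl g) (Sum.inr h) := by
    intro g h
    rw [graphJoin, SimpleGraph.fromRel_adj]
    exact ⟨by simp, Or.inl (Or.inr (Or.inr ⟨rfl, rfl⟩))⟩
  have adj_G : ∀ g g' : α, G.Adj g g' → (graphJoin G H).Adj (Sum.inl g) (Sum.inl g') := by
    intro g g' hadj
    rw [graphJoin, SimpleGraph.fromRel_adj]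
    exact ⟨by simp [hadj.ne], Or.inl (Or.inl ⟨g, g', rfl, rfl, hadj⟩)⟩
  have adj_H : ∀ h h' : β, H.Adj h h' → (graphJoin G H).Adj (Sum.inr h) (Sum.inr h') := by
    intro h h' hadj
    rw [graphJoin, SimpleGraph.fromRel_adj]
    exact ⟨by simp [hadj.ne], Or.inl (Or.inr (Or.inl ⟨h, h', rfl, rfl, hadj⟩))⟩
  constructor
  · -- infinitesimally rigid → no nonzero quadric
    intro hrig hquad
    obtain ⟨A, c, D, hA, hne, hq, hGc, hHc⟩ := hquad
    have hq' : ∀ v, (p v : Fin d → ℝ) ⬝ᵥ A.mulVec (p v) + 2 * ((c : Fin d → ℝ) ⬝ᵥ (p v)) + D = 0 := by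
      intro v
      have h1 := hq v
      unfold OnQuadric at h1
      rwa [sum2_dot, sum1_dot] at h1
    have hGc' : ∀ g g', G.Adj g g' →
        (p (Sum.inl g) : Fin d → ℝ) ⬝ᵥ A.mulVec (p (Sum.inl g'))
          + ((c : Fin d → ℝ) ⬝ᵥ (p (Sum.inl g)) + (c : Fin d → ℝ) ⬝ᵥ (p (Sum.inl g'))) + D = 0 := by
      intro g g' hadj
      have h1 := hGc g g' hadj
      unfold PolarConstraint at h1
      rwa [sum2_dot, sum1_dot'] at h1
    have hHc' : ∀ h h', H.Adj h h' →
        (p (Sum.inr h) : Fin d → ℝ) ⬝ᵥ A.mulVec (p (Sum.inr h'))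
          + ((c : Fin d → ℝ) ⬝ᵥ (p (Sum.inr h)) + (c : Fin d → ℝ) ⬝ᵥ (p (Sum.inr h'))) + D = 0 := by
      intro h h' hadj
      have h1 := hHc h h' hadj
      unfold PolarConstraint at h1
      rwa [sum2_dot, sum1_dot'] at h1
    set p' : α ⊕ β → EuclideanSpace ℝ (Fin d) :=
      Sum.elim (fun g => matApply A (p (Sum.inl g)) + c)
        (fun h => -(matApply A (p (Sum.inr h)) + c)) with hp'_def
    have hsym : ∀ x y : α ⊕ β,
        (inner ℝ (p x - p y) (p' x - p' y) : ℝ) = inner ℝ (p y - p x) (p' y - p' x) := by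
      intro x y
      rw [← inner_neg_neg (𝕜 := ℝ), neg_sub, neg_sub]
    have mcross : ∀ (g : α) (h : β),
        (inner ℝ (p (Sum.inl g) - p (Sum.inr h)) (p' (Sum.inl g) - p' (Sum.inr h)) : ℝ) = 0 := by
      intro g h
      simp only [hp'_def, Sum.elim_inl, Sum.elim_inr]
      rw [inner_dot]
      exact fwd_cross hA (hq' (Sum.inl g)) (hq' (Sum.inr h))
    have msameG : ∀ g g' : α, G.Adj g g' →
        (inner ℝ (p (Sum.inl g) - p (Sum.inl g')) (p' (Sum.inl g) - p' (Sum.inl g')) : ℝ) = 0 := by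
      intro g g' hadj
      simp only [hp'_def, Sum.elim_inl]
      rw [inner_dot]
      exact fwd_same hA (hq' (Sum.inl g)) (hq' (Sum.inl g')) (hGc' g g' hadj)
    have msameH : ∀ h h' : β, H.Adj h h' →
        (inner ℝ (p (Sum.inr h) - p (Sum.inr h')) (p' (Sum.inr h) - p' (Sum.inr h')) : ℝ) = 0 := by
      intro h h' hadj
      simp only [hp'_def, Sum.elim_inr]
      rw [inner_dot]
      exact fwd_same' hA (hq' (Sum.inr h)) (hq' (Sum.inr h')) (hHc' h h' hadj)
    have hmot : IsInfinitesimalMotion (graphJoin G H) p p' := by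
      intro x y hxy
      rw [graphJoin, SimpleGraph.fromRel_adj] at hxy
      obtain ⟨hne', hr | hr⟩ := hxy
      · rcases hr with ⟨a1, a2, rfl, rfl, hadj⟩ | ⟨a1, a2, rfl, rfl, hadj⟩ | ⟨hl, hr2⟩
        · exact msameG a1 a2 hadj
        · exact msameH a1 a2 hadj
        · cases x with
          | inl g =>
            cases y with
            | inl g' => simp at hr2
            | inr h => exact mcross g h
          | inr h => simp at hl
      · rcases hr with ⟨a1, a2, rfl, rfl, hadj⟩ | ⟨a1, a2, rfl, rfl, hadj⟩ | ⟨hl, hr2⟩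
        · rw [hsym]; exact msameG a1 a2 hadj
        · rw [hsym]; exact msameH a1 a2 hadj
        · cases y with
          | inl g =>
            cases x with
            | inl g' => simp at hr2
            | inr h => rw [hsym]; exact mcross g h
          | inr h => simp at hl
    obtain ⟨S, t, hS, hStr⟩ := hrig p' hmot
    have hlin : ∀ g : α,
        matApply A (p (Sum.inl g)) + c = matApply S (p (Sum.inl g)) + t := by
      intro g
      have h1 := hStr (Sum.inl g)
      simp only [hp'_def, Sum.elim_inl] at h1
      exact h1
    have hdiff : ∀ j, (A - S).mulVec (fun i => Ba i j) = 0 := by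
      intro j
      have hxy : (fun i => Ba i j)
          = ((p (Sum.inl (ιa j.succ)) - p (Sum.inl (ιa 0)) : EuclideanSpace ℝ (Fin d)) : Fin d → ℝ) := rfl
      rw [hxy, WithLp.ofLp_sub, Matrix.sub_mulVec, Matrix.mulVec_sub, Matrix.mulVec_sub]
      funext i
      have e1 : A.mulVec (p (Sum.inl (ιa j.succ))) i + c i
          = S.mulVec (p (Sum.inl (ιa j.succ))) i + t i := congrArg (fun v => v i) (hlin (ιa j.succ))
      have e2 : A.mulVec (p (Sum.inl (ιa 0))) i + c i
          = S.mulVec (p (Sum.inl (ιa 0))) i + t i := congrArg (fun v => v i) (hlin (ιa 0))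
      simp only [Pi.sub_apply, Pi.zero_apply]
      linarith
    have hAS : A - S = 0 := kill hBa hdiff
    have hAeqS : A = S := sub_eq_zero.mp hAS
    have hA0 : A = 0 := by
      have h1 : A = -A := by
        calc A = Aᵀ := hA.symm
        _ = Sᵀ := by rw [hAeqS]
        _ = -S := hS
        _ = -A := by rw [hAeqS]
      ext i j
      have := congrFun (congrFun h1 i) j
      simp only [Matrix.neg_apply, Matrix.zero_apply] at this ⊢
      linarith
    have hS0 : S = 0 := hAeqS ▸ hA0
    have hc0 : (c : Fin d → ℝ) = 0 := by
      funext i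
      have e1 : A.mulVec (p (Sum.inl (ιa 0))) i + c i
          = S.mulVec (p (Sum.inl (ιa 0))) i + t i := congrArg (fun v => v i) (hlin (ιa 0))
      have h2 := hStr (Sum.inr (ιb 0))
      simp only [hp'_def, Sum.elim_inr] at h2
      have e2 : -(A.mulVec (p (Sum.inr (ιb 0))) i + c i)
          = S.mulVec (p (Sum.inr (ιb 0))) i + t i := congrArg (fun v => v i) h2
      rw [hA0, hS0] at e1 e2
      simp only [Matrix.zero_mulVec, Pi.zero_apply, zero_add] at e1 e2
      show c i = 0
      linarith
    have hD0 : D = 0 := by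
      have h1 := hq' (Sum.inl (ιa 0))
      rw [hA0, Matrix.zero_mulVec, dotProduct_zero, hc0, zero_dotProduct] at h1
      linarith
    rcases hne with h | h | h
    · exact h hA0
    · exact h (by ext i; simpa using congrFun hc0 i)
    · exact h hD0
  · -- no nonzero quadric → infinitesimally rigid
    intro hnq p' hmot
    have Fab : ∀ (g : α) (h : β),
        ((p (Sum.inl g) : Fin d → ℝ) - (p (Sum.inr h) : Fin d → ℝ)) ⬝ᵥ
          ((p' (Sum.inl g) : Fin d → ℝ) - (p' (Sum.inr h) : Fin d → ℝ)) = 0 := by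
      intro g h
      have h1 := hmot _ _ (adj_cross g h)
      rwa [inner_dot] at h1
    have FG : ∀ g g' : α, G.Adj g g' →
        ((p (Sum.inl g) : Fin d → ℝ) - (p (Sum.inl g') : Fin d → ℝ)) ⬝ᵥ
          ((p' (Sum.inl g) : Fin d → ℝ) - (p' (Sum.inl g') : Fin d → ℝ)) = 0 := by
      intro g g' hadj
      have h1 := hmot _ _ (adj_G g g' hadj)
      rwa [inner_dot] at h1
    have FH : ∀ h h' : β, H.Adj h h' →
        ((p (Sum.inr h) : Fin d → ℝ) - (p (Sum.inr h') : Fin d → ℝ)) ⬝ᵥ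
          ((p' (Sum.inr h) : Fin d → ℝ) - (p' (Sum.inr h') : Fin d → ℝ)) = 0 := by
      intro h h' hadj
      have h1 := hmot _ _ (adj_H h h' hadj)
      rwa [inner_dot] at h1
    have key : ∀ (g g' : α) (h h' : β),
        ((p (Sum.inl g) : Fin d → ℝ) - (p (Sum.inl g') : Fin d → ℝ)) ⬝ᵥ
            ((p' (Sum.inr h) : Fin d → ℝ) - (p' (Sum.inr h') : Fin d → ℝ))
          + ((p (Sum.inr h) : Fin d → ℝ) - (p (Sum.inr h') : Fin d → ℝ)) ⬝ᵥ
            ((p' (Sum.inl g) : Fin d → ℝ) - (p' (Sum.inl g') : Fin d → ℝ)) = 0 :=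
      fun g g' h h' => key4 (Fab g h) (Fab g' h) (Fab g h') (Fab g' h')
    set Wb : Matrix (Fin d) (Fin d) ℝ :=
      Matrix.of (fun j k => p' (Sum.inr (ιb j.succ)) k - p' (Sum.inr (ιb 0)) k) with hWb_def
    set Wa : Matrix (Fin d) (Fin d) ℝ :=
      Matrix.of (fun j k => p' (Sum.inl (ιa j.succ)) k - p' (Sum.inl (ιa 0)) k) with hWa_def
    set M : Matrix (Fin d) (Fin d) ℝ := -((Bbᵀ)⁻¹ * Wb) with hM_def
    set N : Matrix (Fin d) (Fin d) ℝ := -((Baᵀ)⁻¹ * Wa) with hN_def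
    have hBbM : Bbᵀ * M = -Wb := by
      rw [hM_def, mul_neg, ← Matrix.mul_assoc,
        Matrix.mul_nonsing_inv _ (isUnit_iff_ne_zero.2 hBbT), Matrix.one_mul]
    have hBaN : Baᵀ * N = -Wa := by
      rw [hN_def, mul_neg, ← Matrix.mul_assoc,
        Matrix.mul_nonsing_inv _ (isUnit_iff_ne_zero.2 hBaT), Matrix.one_mul]
    have hu : ∀ g g' : α,
        ((p' (Sum.inl g) : Fin d → ℝ) - (p' (Sum.inl g') : Fin d → ℝ))
          = M.mulVec ((p (Sum.inl g) : Fin d → ℝ) - (p (Sum.inl g') : Fin d → ℝ)) := by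
      intro g g'
      apply mulVec_cancel hBbT
      rw [Matrix.mulVec_mulVec, hBbM, Matrix.neg_mulVec]
      funext j
      have hk := key g g' (ιb j.succ) (ιb 0)
      have hc : ((p (Sum.inl g) : Fin d → ℝ) - (p (Sum.inl g') : Fin d → ℝ)) ⬝ᵥ
            ((p' (Sum.inr (ιb j.succ)) : Fin d → ℝ) - (p' (Sum.inr (ιb 0)) : Fin d → ℝ))
          = ((p' (Sum.inr (ιb j.succ)) : Fin d → ℝ) - (p' (Sum.inr (ιb 0)) : Fin d → ℝ)) ⬝ᵥ
            ((p (Sum.inl g) : Fin d → ℝ) - (p (Sum.inl g') : Fin d → ℝ)) := dotProduct_comm _ _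
      show ((p (Sum.inr (ιb j.succ)) : Fin d → ℝ) - (p (Sum.inr (ιb 0)) : Fin d → ℝ)) ⬝ᵥ
          ((p' (Sum.inl g) : Fin d → ℝ) - (p' (Sum.inl g') : Fin d → ℝ))
        = -(((p' (Sum.inr (ιb j.succ)) : Fin d → ℝ) - (p' (Sum.inr (ιb 0)) : Fin d → ℝ)) ⬝ᵥ
            ((p (Sum.inl g) : Fin d → ℝ) - (p (Sum.inl g') : Fin d → ℝ)))
      linarith [hk, hc]
    have hw : ∀ h h' : β,
        ((p' (Sum.inr h) : Fin d → ℝ) - (p' (Sum.inr h') : Fin d → ℝ))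
          = N.mulVec ((p (Sum.inr h) : Fin d → ℝ) - (p (Sum.inr h') : Fin d → ℝ)) := by
      intro h h'
      apply mulVec_cancel hBaT
      rw [Matrix.mulVec_mulVec, hBaN, Matrix.neg_mulVec]
      funext j
      have hk := key (ιa j.succ) (ιa 0) h h'
      have hc : ((p (Sum.inr h) : Fin d → ℝ) - (p (Sum.inr h') : Fin d → ℝ)) ⬝ᵥ
            ((p' (Sum.inl (ιa j.succ)) : Fin d → ℝ) - (p' (Sum.inl (ιa 0)) : Fin d → ℝ))
          = ((p' (Sum.inl (ιa j.succ)) : Fin d → ℝ) - (p' (Sum.inl (ιa 0)) : Fin d → ℝ)) ⬝ᵥ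
            ((p (Sum.inr h) : Fin d → ℝ) - (p (Sum.inr h') : Fin d → ℝ)) := dotProduct_comm _ _
      show ((p (Sum.inl (ιa j.succ)) : Fin d → ℝ) - (p (Sum.inl (ιa 0)) : Fin d → ℝ)) ⬝ᵥ
          ((p' (Sum.inr h) : Fin d → ℝ) - (p' (Sum.inr h') : Fin d → ℝ))
        = -(((p' (Sum.inl (ιa j.succ)) : Fin d → ℝ) - (p' (Sum.inl (ιa 0)) : Fin d → ℝ)) ⬝ᵥ
            ((p (Sum.inr h) : Fin d → ℝ) - (p (Sum.inr h') : Fin d → ℝ)))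
      linarith [hk, hc]
    set e : EuclideanSpace ℝ (Fin d) :=
      p' (Sum.inl (ιa 0)) - matApply M (p (Sum.inl (ιa 0))) with he_def
    set f : EuclideanSpace ℝ (Fin d) :=
      p' (Sum.inr (ιb 0)) - matApply N (p (Sum.inr (ιb 0))) with hf_def
    have hu' : ∀ g : α, p' (Sum.inl g) = matApply M (p (Sum.inl g)) + e := by
      intro g
      ext i
      have e1 : p' (Sum.inl g) i - p' (Sum.inl (ιa 0)) i
          = M.mulVec ((p (Sum.inl g) : Fin d → ℝ) - (p (Sum.inl (ιa 0)) : Fin d → ℝ)) i :=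
        congrFun (hu g (ιa 0)) i
      rw [mulVec_sub_apply] at e1
      show p' (Sum.inl g) i = M.mulVec (p (Sum.inl g)) i
        + (p' (Sum.inl (ιa 0)) i - M.mulVec (p (Sum.inl (ιa 0))) i)
      linarith
    have hw' : ∀ h : β, p' (Sum.inr h) = matApply N (p (Sum.inr h)) + f := by
      intro h
      ext i
      have e1 : p' (Sum.inr h) i - p' (Sum.inr (ιb 0)) i
          = N.mulVec ((p (Sum.inr h) : Fin d → ℝ) - (p (Sum.inr (ιb 0)) : Fin d → ℝ)) i :=
        congrFun (hw h (ιb 0)) i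
      rw [mulVec_sub_apply] at e1
      show p' (Sum.inr h) i = N.mulVec (p (Sum.inr h)) i
        + (p' (Sum.inr (ιb 0)) i - N.mulVec (p (Sum.inr (ιb 0))) i)
      linarith
    have hKM : ∀ (g g' : α) (h h' : β),
        ((p (Sum.inl g) : Fin d → ℝ) - (p (Sum.inl g') : Fin d → ℝ)) ⬝ᵥ
            N.mulVec ((p (Sum.inr h) : Fin d → ℝ) - (p (Sum.inr h') : Fin d → ℝ))
          + ((p (Sum.inr h) : Fin d → ℝ) - (p (Sum.inr h') : Fin d → ℝ)) ⬝ᵥ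
            M.mulVec ((p (Sum.inl g) : Fin d → ℝ) - (p (Sum.inl g') : Fin d → ℝ)) = 0 := by
      intro g g' h h'
      rw [← hu g g', ← hw h h']
      exact key g g' h h'
    have hKcol : ∀ j, (N + Mᵀ).mulVec (fun i => Bb i j) = 0 := by
      intro j
      apply mulVec_cancel hBaT
      rw [Matrix.mulVec_zero]
      funext i
      have h1 := hKM (ιa i.succ) (ιa 0) (ιb j.succ) (ιb 0)
      have h2 : ((p (Sum.inr (ιb j.succ)) : Fin d → ℝ) - (p (Sum.inr (ιb 0)) : Fin d → ℝ)) ⬝ᵥ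
            M.mulVec ((p (Sum.inl (ιa i.succ)) : Fin d → ℝ) - (p (Sum.inl (ιa 0)) : Fin d → ℝ))
          = ((p (Sum.inl (ιa i.succ)) : Fin d → ℝ) - (p (Sum.inl (ιa 0)) : Fin d → ℝ)) ⬝ᵥ
            Mᵀ.mulVec ((p (Sum.inr (ιb j.succ)) : Fin d → ℝ) - (p (Sum.inr (ιb 0)) : Fin d → ℝ)) :=
        dot_swap M _ _
      show ((p (Sum.inl (ιa i.succ)) : Fin d → ℝ) - (p (Sum.inl (ιa 0)) : Fin d → ℝ)) ⬝ᵥ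
          ((N + Mᵀ).mulVec ((p (Sum.inr (ιb j.succ)) : Fin d → ℝ) - (p (Sum.inr (ιb 0)) : Fin d → ℝ))) = 0
      rw [Matrix.add_mulVec, dotProduct_add]
      linarith [h1, h2]
    have hK : N + Mᵀ = 0 := kill hBb hKcol
    have hNM : N = -Mᵀ := eq_neg_of_add_eq_zero_left hK
    have hrawq : ∀ (g : α) (hh : β),
        (p (Sum.inl g) : Fin d → ℝ) ⬝ᵥ M.mulVec (p (Sum.inl g))
            + (p (Sum.inl g) : Fin d → ℝ) ⬝ᵥ ((e : Fin d → ℝ) - (f : Fin d → ℝ))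
          = (p (Sum.inr hh) : Fin d → ℝ) ⬝ᵥ M.mulVec (p (Sum.inr hh))
            + (p (Sum.inr hh) : Fin d → ℝ) ⬝ᵥ ((e : Fin d → ℝ) - (f : Fin d → ℝ)) := by
      intro g hh
      apply rawq_eq (M := M)
      have h0 := Fab g hh
      rw [hu' g, hw' hh, hNM] at h0
      exact h0
    set Dv : ℝ := -((p (Sum.inl (ιa 0)) : Fin d → ℝ) ⬝ᵥ M.mulVec (p (Sum.inl (ιa 0)))
      + (p (Sum.inl (ιa 0)) : Fin d → ℝ) ⬝ᵥ ((e : Fin d → ℝ) - (f : Fin d → ℝ))) with hDv_def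
    have hvalA : ∀ g : α,
        (p (Sum.inl g) : Fin d → ℝ) ⬝ᵥ M.mulVec (p (Sum.inl g))
          + (p (Sum.inl g) : Fin d → ℝ) ⬝ᵥ ((e : Fin d → ℝ) - (f : Fin d → ℝ)) + Dv = 0 := by
      intro g
      have h1 := hrawq g (ιb 0)
      have h2 := hrawq (ιa 0) (ιb 0)
      rw [hDv_def]
      linarith
    have hvalB : ∀ hh : β,
        (p (Sum.inr hh) : Fin d → ℝ) ⬝ᵥ M.mulVec (p (Sum.inr hh))
          + (p (Sum.inr hh) : Fin d → ℝ) ⬝ᵥ ((e : Fin d → ℝ) - (f : Fin d → ℝ)) + Dv = 0 := by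
      intro hh
      have h1 := hrawq (ιa 0) hh
      rw [hDv_def]
      linarith
    have hAsymm : ((1/2 : ℝ) • (M + Mᵀ)).IsSymm := by
      rw [Matrix.IsSymm, Matrix.transpose_smul, Matrix.transpose_add,
        Matrix.transpose_transpose, add_comm Mᵀ M]
    have honq : ∀ v, OnQuadric ((1/2 : ℝ) • (M + Mᵀ))
        (WithLp.toLp 2 ((1/2 : ℝ) • ((e : Fin d → ℝ) - (f : Fin d → ℝ)))) Dv (p v) := by
      intro v
      unfold OnQuadric
      rw [sum2_dot, sum1_dot]
      cases v with
      | inl g => exact bwd_onquad (hvalA g)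
      | inr hh => exact bwd_onquad (hvalB hh)
    have hpolG : ∀ g g', G.Adj g g' →
        PolarConstraint ((1/2 : ℝ) • (M + Mᵀ)) (WithLp.toLp 2 ((1/2 : ℝ) • ((e : Fin d → ℝ) - (f : Fin d → ℝ)))) Dv
          (p (Sum.inl g)) (p (Sum.inl g')) := by
      intro g g' hadj
      have hflex := FG g g' hadj
      rw [hu' g, hu' g', WithLp.ofLp_add, WithLp.ofLp_add, add_sub_add_right_eq_sub, matApply_sub'] at hflex
      unfold PolarConstraint
      rw [sum2_dot, sum1_dot']
      exact bwd_polar (hvalA g) (hvalA g') hflex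
    have hpolH : ∀ h h', H.Adj h h' →
        PolarConstraint ((1/2 : ℝ) • (M + Mᵀ)) (WithLp.toLp 2 ((1/2 : ℝ) • ((e : Fin d → ℝ) - (f : Fin d → ℝ)))) Dv
          (p (Sum.inr h)) (p (Sum.inr h')) := by
      intro h h' hadj
      have hflex := FH h h' hadj
      rw [hw' h, hw' h', WithLp.ofLp_add, WithLp.ofLp_add, add_sub_add_right_eq_sub, matApply_sub', hNM, Matrix.neg_mulVec,
        dotProduct_neg, neg_eq_zero] at hflex
      have hflex' : ((p (Sum.inr h) : Fin d → ℝ) - (p (Sum.inr h') : Fin d → ℝ)) ⬝ᵥ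
          M.mulVec ((p (Sum.inr h) : Fin d → ℝ) - (p (Sum.inr h') : Fin d → ℝ)) = 0 := by
        rw [dot_swap M]
        exact hflex
      unfold PolarConstraint
      rw [sum2_dot, sum1_dot']
      exact bwd_polar (hvalB h) (hvalB h') hflex'
    have hzero : ¬(((1/2 : ℝ) • (M + Mᵀ) : Matrix (Fin d) (Fin d) ℝ) ≠ 0
        ∨ WithLp.toLp 2 ((1/2 : ℝ) • ((e : Fin d → ℝ) - (f : Fin d → ℝ)) : Fin d → ℝ) ≠ 0 ∨ Dv ≠ 0) := by
      intro hne
      exact hnq ⟨(1/2 : ℝ) • (M + Mᵀ), WithLp.toLp 2 ((1/2 : ℝ) • ((e : Fin d → ℝ) - (f : Fin d → ℝ))), Dv,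
        hAsymm, hne, honq, hpolG, hpolH⟩
    push_neg at hzero
    obtain ⟨hAm0, hcv0, hDv0⟩ := hzero
    have hMM : M + Mᵀ = 0 := by
      ext i j
      have h1 := congrFun (congrFun hAm0 i) j
      simp only [Matrix.smul_apply, Matrix.add_apply, Matrix.zero_apply, smul_eq_mul] at h1 ⊢
      linarith
    have hMskew : Mᵀ = -M := eq_neg_of_add_eq_zero_right hMM
    have hfe : (f : Fin d → ℝ) = (e : Fin d → ℝ) := by
      funext i
      have h1 : (1/2 : ℝ) * (e i - f i) = 0 := congrArg (fun v => v i) hcv0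
      linarith
    refine ⟨M, e, hMskew, ?_⟩
    intro v
    cases v with
    | inl g => exact hu' g
    | inr h =>
      have h1 := hw' h
      rw [hNM, hMskew, neg_neg] at h1
      have h2 : f = e := by ext i; exact congrFun hfe i
      rw [h2] at h1
      exact h1


end
end
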